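/- arXiv:2601.03876 — 2 statements merged into one kernel-verified Lean document; each statement's English description precedes it below -/
import Mathlib

section
/- For all t > 0, the Rogers dilogarithm satisfies Landau's identity 𝓛(−1/t) = −𝓛(1/(1+t)), where on negative reals 𝓛 is defined via the real-analytic continuation 𝓛(x) = Li₂(x) + (1/2)·log|x|·log(1−x). -/
open Real MeasureTheory Filter Set

/-- The real dilogarithm, defined for `x ≤ 1` via the integral
`Li₂(x) = -∫₀ˣ log(1-t)/t dt`. -/
noncomputable def Li2 (x : ℝ) : ℝ := -∫ t in (0:ℝ)..x, Real.log (1 - t) / t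

/-- The Rogers dilogarithm `𝓛(x) = Li₂(x) + (1/2)·log|x|·log(1-x)`
(note `Real.log` of a negative number is the log of its absolute value,
and `Real.log 0 = 0`, so this formula also covers `x ≤ 0` and the endpoints). -/
noncomputable def rogersL (x : ℝ) : ℝ := Li2 x + (1/2) * Real.log x * Real.log (1 - x)

/-- continuous extension of the integrand -/
noncomputable def g0 (t : ℝ) : ℝ := if t = 0 then -1 else Real.log (1 - t) / t

lemma hasDerivAt_log_one_sub : HasDerivAt (fun t : ℝ => Real.log (1 - t)) (-1) 0 := by
  have h1 : HasDerivAt (fun t : ℝ => 1 - t) (-1) 0 := by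
    simpa using (hasDerivAt_id' (0:ℝ)).const_sub (1:ℝ)
  have h2 : HasDerivAt Real.log ((1:ℝ)⁻¹) ((1:ℝ) - 0) := by
    simpa using Real.hasDerivAt_log (by norm_num : ((1:ℝ)-0) ≠ 0)
  simpa [Function.comp_def] using h2.comp 0 h1

lemma tendsto_slope_log : Tendsto (fun t : ℝ => Real.log (1 - t) / t) (nhdsWithin 0 {0}ᶜ) (nhds (-1)) := by
  have := hasDerivAt_iff_tendsto_slope.mp hasDerivAt_log_one_sub
  refine this.congr (fun t => ?_)
  simp [slope_def_field]

lemma g0_contAt {x : ℝ} (hx : x < 1) : ContinuousAt g0 x := by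
  rcases eq_or_ne x 0 with rfl | hx0
  · rw [ContinuousAt]
    have h0 : g0 0 = -1 := by simp [g0]
    rw [h0, ← nhdsNE_sup_pure (0:ℝ)]
    refine Tendsto.sup ?_ ?_
    · refine tendsto_slope_log.congr' ?_
      filter_upwards [self_mem_nhdsWithin] with t ht
      simp [g0, show t ≠ 0 from ht]
    · simpa [h0] using tendsto_pure_nhds g0 0
  · have : ContinuousAt (fun t => Real.log (1 - t) / t) x := by
      have h1x : (1:ℝ) - x ≠ 0 := sub_ne_zero.mpr (ne_of_gt hx)
      exact ((Real.continuousAt_log h1x).comp ((continuous_const.sub continuous_id).continuousAt)).div continuousAt_id hx0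
    refine this.congr ?_
    filter_upwards [isOpen_ne.mem_nhds hx0] with t ht
    simp [g0, ht]

lemma Li2_eq (x : ℝ) : Li2 x = -∫ t in (0:ℝ)..x, g0 t := by
  unfold Li2
  congr 1
  apply intervalIntegral.integral_congr_ae
  have h0 : ∀ᵐ t : ℝ ∂volume, t ≠ 0 := by
    rw [MeasureTheory.ae_iff]
    simp
  filter_upwards [h0] with t ht _
  simp [g0, ht]

lemma hasDerivAt_Li2 {x : ℝ} (hx : x < 1) : HasDerivAt Li2 (-(g0 x)) x := by
  have hfun : Li2 = fun y => -∫ t in (0:ℝ)..y, g0 t := funext Li2_eq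
  rw [hfun]
  have hsub : Set.uIcc (0:ℝ) x ⊆ Set.Iio 1 := by
    intro s hs
    simp only [Set.mem_uIcc] at hs
    simp only [Set.mem_Iio]
    rcases hs with h | h
    · exact lt_of_le_of_lt h.2 hx
    · exact lt_of_le_of_lt h.2 one_pos
  have hcont : ContinuousOn g0 (Set.Iio 1) := fun t ht => (g0_contAt ht).continuousWithinAt
  have hint : IntervalIntegrable g0 volume 0 x :=
    (hcont.mono hsub).intervalIntegrable
  have hmeas : StronglyMeasurableAtFilter g0 (nhds x) volume :=
    hcont.stronglyMeasurableAtFilter isOpen_Iio x hx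
  exact (intervalIntegral.integral_hasDerivAt_right hint hmeas (g0_contAt hx)).neg

lemma hasDerivAt_rogersL {x : ℝ} (hx : x < 1) (hx0 : x ≠ 0) :
    HasDerivAt rogersL (-(1/2) * (Real.log (1-x)/x) - (1/2) * (Real.log x/(1-x))) x := by
  have h1x : (1:ℝ) - x ≠ 0 := sub_ne_zero.mpr (ne_of_gt hx)
  have h1 : HasDerivAt Li2 (-(Real.log (1-x)/x)) x := by
    have := hasDerivAt_Li2 hx
    simpa [g0, hx0] using this
  have h2 : HasDerivAt Real.log x⁻¹ x := Real.hasDerivAt_log hx0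
  have h3 : HasDerivAt (fun y : ℝ => Real.log (1 - y)) (-(1-x)⁻¹) x := by
    have ha : HasDerivAt (fun y : ℝ => 1 - y) (-1) x := by
      simpa using (hasDerivAt_id' x).const_sub (1:ℝ)
    have hb : HasDerivAt Real.log ((1-x)⁻¹) (1 - x) := Real.hasDerivAt_log h1x
    simpa [mul_comm, Function.comp_def] using hb.comp x ha
  have h4 : HasDerivAt (fun y : ℝ => (1/2) * Real.log y * Real.log (1 - y))
      ((1/2) * x⁻¹ * Real.log (1-x) + (1/2) * Real.log x * (-(1-x)⁻¹)) x :=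
    (h2.const_mul (1/2 : ℝ)).mul h3
  have h5 := h1.add h4
  have : -(Real.log (1-x)/x) + ((1/2) * x⁻¹ * Real.log (1-x) + (1/2) * Real.log x * (-(1-x)⁻¹))
      = -(1/2) * (Real.log (1-x)/x) - (1/2) * (Real.log x/(1-x)) := by
    field_simp
    ring
  rw [this] at h5
  exact h5

noncomputable def Gfun (t : ℝ) : ℝ := rogersL (-1/t) + rogersL (1/(1+t))

lemma hasDerivAt_G {t : ℝ} (ht : 0 < t) : HasDerivAt Gfun 0 t := by
  have ht0 : t ≠ 0 := ht.ne'
  have h1t : (0:ℝ) < 1 + t := by linarith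
  have h1t0 : (1:ℝ) + t ≠ 0 := h1t.ne'
  have hinner1 : HasDerivAt (fun s : ℝ => -1/s) ((t^2)⁻¹) t := by
    simpa [neg_div, one_div, Pi.neg_def] using (hasDerivAt_inv ht0).neg
  have hinner2 : HasDerivAt (fun s : ℝ => 1/(1+s)) (-((1+t)^2)⁻¹) t := by
    have ha : HasDerivAt (fun s : ℝ => 1 + s) 1 t := by
      simpa using (hasDerivAt_id' t).const_add (1:ℝ)
    have hb : HasDerivAt (fun y : ℝ => y⁻¹) (-((1+t)^2)⁻¹) (1+t) := hasDerivAt_inv h1t0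
    simpa [one_div, Function.comp_def] using hb.comp t ha
  have hx1neg : (-1/t : ℝ) < 0 := by
    have h : (0:ℝ) < 1/t := by positivity
    rw [neg_div]
    linarith
  have hx1lt : (-1/t : ℝ) < 1 := by linarith
  have hx1ne : (-1/t : ℝ) ≠ 0 := ne_of_lt hx1neg
  have hx2pos : (0:ℝ) < 1/(1+t) := by positivity
  have hx2lt : (1/(1+t) : ℝ) < 1 := by
    rw [div_lt_one h1t]; linarith
  have hx2ne : (1/(1+t) : ℝ) ≠ 0 := ne_of_gt hx2pos
  have hcomp1 := (hasDerivAt_rogersL hx1lt hx1ne).comp t hinner1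
  have hcomp2 := (hasDerivAt_rogersL hx2lt hx2ne).comp t hinner2
  have hG := hcomp1.add hcomp2
  have e1 : (1:ℝ) - (-1/t) = (1+t)/t := by field_simp; ring
  have e2 : Real.log ((1+t)/t) = Real.log (1+t) - Real.log t := Real.log_div h1t0 ht0
  have e3 : Real.log (-1/t) = -Real.log t := by
    rw [neg_div, Real.log_neg_eq_log, one_div, Real.log_inv]
  have e4 : (1:ℝ) - 1/(1+t) = t/(1+t) := by field_simp; ring
  have e5 : Real.log (t/(1+t)) = Real.log t - Real.log (1+t) := Real.log_div ht0 h1t0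
  have e6 : Real.log (1/(1+t)) = -Real.log (1+t) := by rw [one_div, Real.log_inv]
  have hzero :
      (-(1/2) * (Real.log (1-(-1/t))/(-1/t)) - (1/2) * (Real.log (-1/t)/(1-(-1/t)))) * (t^2)⁻¹
      + (-(1/2) * (Real.log (1-1/(1+t))/(1/(1+t))) - (1/2) * (Real.log (1/(1+t))/(1-1/(1+t))))
        * (-((1+t)^2)⁻¹) = 0 := by
    rw [e1, e2, e3, e4, e5, e6]
    field_simp
    ring
  rw [← hzero]
  exact hG

lemma rogersL_zero : rogersL 0 = 0 := by
  simp [rogersL, Li2]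

lemma contAt_rogersL_zero : ContinuousAt rogersL 0 := by
  have hLi : ContinuousAt Li2 0 := (hasDerivAt_Li2 (by norm_num : (0:ℝ) < 1)).continuousAt
  have hP : ContinuousAt (fun x : ℝ => (1/2) * Real.log x * Real.log (1-x)) 0 := by
    have key : Tendsto (fun x : ℝ => Real.log x * Real.log (1-x)) (nhds 0) (nhds 0) := by
      nth_rewrite 1 [← nhdsNE_sup_pure (0:ℝ)]
      refine tendsto_sup.mpr ⟨?_, ?_⟩
      swap
      · have h := tendsto_pure_nhds (fun x : ℝ => Real.log x * Real.log (1-x)) 0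
        simp only [Real.log_zero, zero_mul] at h
        exact h
      have hA : Tendsto (fun x : ℝ => x * Real.log x) (nhdsWithin 0 {0}ᶜ) (nhds 0) := by
        rw [← nhdsLT_sup_nhdsGT (0:ℝ)]
        refine tendsto_sup.mpr ⟨?_, ?_⟩
        · exact tendsto_log_mul_self_nhdsLT_zero.congr (fun x => mul_comm _ _)
        · have h := tendsto_log_mul_rpow_nhdsGT_zero one_pos
          simp only [Real.rpow_one] at h
          exact h.congr (fun x => mul_comm _ _)
      have hprod := hA.mul tendsto_slope_log
      rw [show (0:ℝ) * (-1) = 0 by ring] at hprod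
      refine Tendsto.congr' ?_ hprod
      filter_upwards [self_mem_nhdsWithin] with x hx
      have hx0 : x ≠ 0 := hx
      field_simp
    rw [ContinuousAt]
    have h0 : (1/2 : ℝ) * Real.log 0 * Real.log (1-0) = 0 := by simp
    rw [h0]
    have := key.const_mul (1/2 : ℝ)
    rw [mul_zero] at this
    refine this.congr (fun x => by ring)
  exact hLi.add hP

lemma tendsto_G : Tendsto Gfun atTop (nhds 0) := by
  have h1 : Tendsto (fun t : ℝ => -1/t) atTop (nhds 0) := by
    have := (tendsto_inv_atTop_zero (𝕜 := ℝ)).neg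
    rw [neg_zero] at this
    refine this.congr (fun x => by rw [neg_div, one_div])
  have h2 : Tendsto (fun t : ℝ => 1/(1+t)) atTop (nhds 0) := by
    have ha : Tendsto (fun t : ℝ => 1 + t) atTop atTop :=
      tendsto_atTop_add_const_left _ 1 tendsto_id
    have := (tendsto_inv_atTop_zero (𝕜 := ℝ)).comp ha
    refine this.congr (fun x => by simp [one_div])
  have hc : Tendsto rogersL (nhds 0) (nhds 0) := by
    have := contAt_rogersL_zero
    rwa [ContinuousAt, rogersL_zero] at this
  have := (hc.comp h1).add (hc.comp h2)
  rw [add_zero] at this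
  exact this.congr (fun x => by simp [Gfun, Function.comp])

/-- Landau's identity for the Rogers dilogarithm. -/
theorem rogersL_landau (t : ℝ) (ht : 0 < t) :
    rogersL (-1 / t) = -rogersL (1 / (1 + t)) := by
  have key : Gfun t = 0 := by
    have hconst : ∀ s ∈ Set.Ioi (0:ℝ), Gfun s = Gfun t := by
      intro s hs
      have hle := Convex.norm_image_sub_le_of_norm_hasDerivWithin_le
        (f := Gfun) (f' := fun _ => (0:ℝ)) (C := 0) (s := Set.Ioi (0:ℝ))
        (fun x hx => (hasDerivAt_G (Set.mem_Ioi.mp hx)).hasDerivWithinAt)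
        (fun x _ => by simp) (convex_Ioi 0) (Set.mem_Ioi.mpr ht) hs
      rw [zero_mul] at hle
      have := norm_le_zero_iff.mp hle
      linarith [sub_eq_zero.mp this]
    have hev : ∀ᶠ s in atTop, Gfun s = Gfun t := by
      filter_upwards [eventually_gt_atTop (0:ℝ)] with s hs
      exact hconst s hs
    have htend : Tendsto Gfun atTop (nhds (Gfun t)) := by
      refine Tendsto.congr' ?_ (tendsto_const_nhds (x := Gfun t) (f := (atTop : Filter ℝ)))
      filter_upwards [hev] with s hs
      exact hs.symm
    exact tendsto_nhds_unique htend tendsto_G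
  have : rogersL (-1/t) + rogersL (1/(1+t)) = 0 := key
  linarith
end

section
/- Let c < d be reals. Then the function x ↦ (2/(x−d))·log|(x−c)/(d−c)| − (2/(x−c))·log|(x−d)/(c−d)| on (−∞, c) equals 4·(d/dx)[𝓛((x−c)/(d−c))], where 𝓛 is the real Rogers dilogarithm extended to negative arguments by 𝓛(x) = Li₂(x) + (1/2)·log|x|·log(1−x). Consequently ∫_{−∞}^{0} of this function in x (taking c = 2, d = 2+2a with a ∈ (0,1)) equals 4·𝓛(a/(1+a)). -/
open Real MeasureTheory

open Set Filter


lemma measurable_dilogInt : Measurable (fun t : ℝ => Real.log (1 - t) / t) :=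
  (Real.measurable_log.comp (measurable_const.sub measurable_id)).div measurable_id

lemma dilog_bound_neg {t : ℝ} (ht : t ≤ 0) : |Real.log (1 - t) / t| ≤ 1 := by
  rcases eq_or_lt_of_le ht with rfl | ht'
  · simp
  · have h1 : (0:ℝ) < 1 - t := by linarith
    have h2 : Real.log (1 - t) ≤ -t := by
      have := Real.log_le_sub_one_of_pos h1; linarith
    have h3 : 0 ≤ Real.log (1 - t) := Real.log_nonneg (by linarith)
    rw [abs_div, abs_of_nonneg h3, abs_of_neg ht']
    rw [div_le_one (by linarith)]
    exact h2

lemma dilog_bound_pos {y t : ℝ} (hy : y < 1) (h0 : 0 < t) (hty : t ≤ y) :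
    |Real.log (1 - t) / t| ≤ (1 - y)⁻¹ := by
  have h1 : (0:ℝ) < 1 - t := by linarith
  have h2 : -Real.log (1 - t) ≤ t / (1 - t) := by
    have := Real.log_le_sub_one_of_pos (inv_pos.2 h1)
    rw [Real.log_inv] at this
    have : -Real.log (1 - t) ≤ (1 - t)⁻¹ - 1 := this
    have heq : (1 - t)⁻¹ - 1 = t / (1 - t) := by field_simp; ring
    linarith [heq ▸ this]
  have h3 : Real.log (1 - t) ≤ 0 := Real.log_nonpos (by linarith) (by linarith)
  rw [abs_div, abs_of_nonpos h3, abs_of_pos h0, div_le_iff₀ h0]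
  have : t / (1 - t) ≤ t * (1 - y)⁻¹ := by
    rw [div_eq_mul_inv]
    exact mul_le_mul_of_nonneg_left (by
      apply inv_anti₀ (by linarith) (by linarith)) h0.le
  calc -Real.log (1 - t) ≤ t / (1 - t) := h2
    _ ≤ t * (1 - y)⁻¹ := this
    _ = (1 - y)⁻¹ * t := mul_comm _ _

lemma dilog_intervalIntegrable {y : ℝ} (hy : y < 1) :
    IntervalIntegrable (fun t : ℝ => Real.log (1 - t) / t) volume 0 y := by
  rw [intervalIntegrable_iff]
  apply Measure.integrableOn_of_bounded (M := max 1 (1 - y)⁻¹)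
  · exact (measure_Ioc_lt_top).ne
  · exact measurable_dilogInt.aestronglyMeasurable
  · filter_upwards [ae_restrict_mem measurableSet_uIoc] with t ht
    rw [Real.norm_eq_abs]
    rcases Set.mem_uIoc.1 ht with ⟨h1, h2⟩ | ⟨h1, h2⟩
    · exact (dilog_bound_pos hy h1 h2).trans (le_max_right _ _)
    · exact (dilog_bound_neg h2).trans (le_max_left _ _)

lemma Li2_hasDerivAt {y : ℝ} (hy0 : y ≠ 0) (hy1 : y < 1) :
    HasDerivAt Li2 (-(Real.log (1 - y) / y)) y := by
  have hcont : ContinuousAt (fun t : ℝ => Real.log (1 - t) / t) y := by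
    apply ContinuousAt.div
    · exact (Real.continuousAt_log (by linarith)).comp (continuousAt_const.sub continuousAt_id)
    · exact continuousAt_id
    · exact hy0
  have h := intervalIntegral.integral_hasDerivAt_right (dilog_intervalIntegrable hy1)
    measurable_dilogInt.stronglyMeasurable.stronglyMeasurableAtFilter hcont
  exact h.neg

lemma rogersL_hasDerivAt {y : ℝ} (hy0 : y ≠ 0) (hy1 : y < 1) :
    HasDerivAt rogersL (-(1/2) * (Real.log (1 - y) / y + Real.log y / (1 - y))) y := by
  have h1y : (1:ℝ) - y ≠ 0 := by linarith
  have hlog1 : HasDerivAt (fun x : ℝ => Real.log (1 - x)) (-(1 - y)⁻¹) y := by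
    have h := (Real.hasDerivAt_log h1y).comp y
      ((hasDerivAt_const y (1:ℝ)).sub (hasDerivAt_id y))
    simpa [Function.comp_def] using h
  have h2 : HasDerivAt (fun x : ℝ => (1/2) * Real.log x * Real.log (1 - x))
      (((1/2) * y⁻¹) * Real.log (1 - y) + ((1/2) * Real.log y) * (-(1 - y)⁻¹)) y := by
    exact (((Real.hasDerivAt_log hy0).const_mul (1/2)).mul hlog1)
  have h := (Li2_hasDerivAt hy0 hy1).add h2
  refine h.congr_deriv ?_
  field_simp
  ring

lemma rogersL_comp_hasDerivAt {c d x : ℝ} (hcd : c < d) (hxc : x ≠ c) (hxd : x < d) :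
    HasDerivAt (fun t : ℝ => rogersL ((t - c) / (d - c)))
      ((-(1/2) * (Real.log (1 - (x - c) / (d - c)) / ((x - c) / (d - c))
        + Real.log ((x - c) / (d - c)) / (1 - (x - c) / (d - c)))) * (1 / (d - c))) x := by
  have hdc : (0:ℝ) < d - c := by linarith
  have hu0 : (x - c) / (d - c) ≠ 0 := div_ne_zero (sub_ne_zero.2 hxc) hdc.ne'
  have hu1 : (x - c) / (d - c) < 1 := by rw [div_lt_one hdc]; linarith
  have hinner : HasDerivAt (fun t : ℝ => (t - c) / (d - c)) (1 / (d - c)) x := by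
    simpa using ((hasDerivAt_id x).sub_const c).div_const (d - c)
  exact (rogersL_hasDerivAt hu0 hu1).comp x hinner

lemma key_alg {c d x : ℝ} (hcd : c < d) (hx : x < c) :
    (2 / (x - d)) * Real.log |(x - c) / (d - c)|
      - (2 / (x - c)) * Real.log |(x - d) / (c - d)| =
    4 * ((-(1/2) * (Real.log (1 - (x - c) / (d - c)) / ((x - c) / (d - c))
        + Real.log ((x - c) / (d - c)) / (1 - (x - c) / (d - c)))) * (1 / (d - c))) := by
  have hdc : (0:ℝ) < d - c := by linarith
  have h1u : (x - d) / (c - d) = 1 - (x - c) / (d - c) := by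
    rw [eq_sub_iff_add_eq, div_add_div _ _ (by linarith : c - d ≠ 0) hdc.ne']
    rw [div_eq_one_iff_eq (by nlinarith : (c - d) * (d - c) ≠ 0)]
    ring
  rw [Real.log_abs, Real.log_abs, h1u]
  obtain ⟨u, hu⟩ : ∃ u, (x - c) / (d - c) = u := ⟨_, rfl⟩
  rw [hu]
  have hu0 : u < 0 := by rw [← hu]; exact div_neg_of_neg_of_pos (by linarith) hdc
  have hx_c : x - c = (d - c) * u := by rw [← hu]; field_simp
  have hx_d : x - d = -((d - c) * (1 - u)) := by linear_combination hx_c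
  rw [hx_c, hx_d]
  have h1u' : (1:ℝ) - u ≠ 0 := by linarith
  field_simp [hu0.ne]
  ring

lemma rprime_nonneg {u : ℝ} (hu : u < -1) :
    0 ≤ -(1/2) * (Real.log (1 - u) / u + Real.log u / (1 - u)) := by
  have h0 : (0:ℝ) < -u := by linarith
  have h1 : (0:ℝ) < 1 - u := by linarith
  have hA : 0 ≤ Real.log (-u) := Real.log_nonneg (by linarith)
  have hAB : Real.log (-u) ≤ Real.log (1 - u) := Real.log_le_log h0 (by linarith)
  have key : Real.log (-u) * (-u) ≤ Real.log (1 - u) * (1 - u) := by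
    calc Real.log (-u) * (-u) ≤ Real.log (1 - u) * (-u) :=
          mul_le_mul_of_nonneg_right hAB h0.le
      _ ≤ Real.log (1 - u) * (1 - u) :=
          mul_le_mul_of_nonneg_left (by linarith) (hA.trans hAB)
  have hdiv : Real.log (-u) / (1 - u) ≤ Real.log (1 - u) / (-u) := by
    rw [div_le_div_iff₀ h1 h0]
    linarith [key]
  rw [← Real.log_neg_eq_log u]
  have h2 : Real.log (1 - u) / u = -(Real.log (1 - u) / (-u)) := by
    field_simp
  rw [h2]
  linarith [hdiv]

lemma G_hasDerivAt {a : ℝ} (ha : 0 < a) :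
    HasDerivAt (fun s : ℝ => rogersL (-1/s) - rogersL (s/(1+s))) 0 a := by
  have h1a : (0:ℝ) < 1 + a := by linarith
  have i1 : HasDerivAt (fun s : ℝ => -1/s) ((a^2)⁻¹) a := by
    have h := (hasDerivAt_inv ha.ne').neg
    simp only [neg_neg] at h
    rw [show (fun s : ℝ => -1/s) = -fun y => y⁻¹ from ?_]; exact h
    · funext s; rw [neg_div, one_div]; rfl
  have hy10 : -1/a ≠ 0 := by
    have : -1/a < 0 := div_neg_of_neg_of_pos (by norm_num) ha
    exact this.ne
  have hy11 : -1/a < 1 := by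
    have : -1/a < 0 := div_neg_of_neg_of_pos (by norm_num) ha
    linarith
  have c1 := (rogersL_hasDerivAt hy10 hy11).comp a i1
  have i2 : HasDerivAt (fun s : ℝ => s/(1+s)) ((1 * (1+a) - a * 1)/(1+a)^2) a :=
    (hasDerivAt_id a).div ((hasDerivAt_id a).const_add 1) h1a.ne'
  have hy20 : a/(1+a) ≠ 0 := (div_pos ha h1a).ne'
  have hy21 : a/(1+a) < 1 := by rw [div_lt_one h1a]; linarith
  have c2 := (rogersL_hasDerivAt hy20 hy21).comp a i2
  have h := c1.sub c2
  refine h.congr_deriv ?_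
  symm
  have e1 : (1:ℝ) - (-1/a) = (1+a)/a := by field_simp; ring
  have e2 : (1:ℝ) - a/(1+a) = 1/(1+a) := by field_simp; ring
  rw [e1, e2]
  rw [Real.log_div h1a.ne' ha.ne']
  rw [Real.log_div ha.ne' h1a.ne']
  have e3 : Real.log (-1/a) = -Real.log a := by
    rw [neg_div, Real.log_neg_eq_log, one_div, Real.log_inv]
  have e4 : Real.log (1/(1+a)) = -Real.log (1+a) := by
    rw [one_div, Real.log_inv]
  rw [e3, e4]
  simp only [div_div_eq_mul_div]
  field_simp
  ring

lemma G_const {a b : ℝ} (ha : 0 < a) (hb : 0 < b) :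
    rogersL (-1/a) - rogersL (a/(1+a)) = rogersL (-1/b) - rogersL (b/(1+b)) := by
  set G : ℝ → ℝ := fun s => rogersL (-1/s) - rogersL (s/(1+s)) with hG
  suffices h : ∀ x y : ℝ, 0 < x → x < y → G x = G y by
    rcases lt_trichotomy a b with hab | hab | hab
    · exact h a b ha hab
    · rw [hab]
    · exact (h b a hb hab).symm
  intro x y hx hxy
  have hcont : ContinuousOn G (Icc x y) := fun z hz =>
    (G_hasDerivAt (lt_of_lt_of_le hx hz.1)).continuousAt.continuousWithinAt
  have hderiv : ∀ z ∈ Ioo x y, HasDerivAt G ((fun _ : ℝ => (0:ℝ)) z) z := fun z hz =>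
    G_hasDerivAt (lt_trans hx hz.1)
  obtain ⟨w, _, hw⟩ := exists_hasDerivAt_eq_slope G (fun _ => (0:ℝ)) hxy hcont hderiv
  have : G y - G x = 0 := by
    have h2 := hw.symm
    rw [div_eq_zero_iff] at h2
    rcases h2 with h2 | h2
    · linarith [h2]
    · linarith [sub_ne_zero.2 hxy.ne' h2]
  linarith

lemma log_one_sub_bound {x : ℝ} (h0 : 0 < x) (h2 : x ≤ 1/2) : |Real.log (1 - x)| ≤ 2 * x := by
  have h1 : (0:ℝ) < 1 - x := by linarith
  have hle : Real.log (1 - x) ≤ 0 := Real.log_nonpos (by linarith) (by linarith)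
  rw [abs_of_nonpos hle]
  have h3 : -Real.log (1 - x) ≤ (1 - x)⁻¹ - 1 := by
    have := Real.log_le_sub_one_of_pos (inv_pos.2 h1)
    rw [Real.log_inv] at this
    linarith
  have h4 : (1 - x)⁻¹ - 1 = x / (1 - x) := by field_simp; ring
  have h5 : x / (1 - x) ≤ 2 * x := by
    rw [div_le_iff₀ h1]
    nlinarith
  linarith [h4 ▸ h3]

lemma rogersL_tendsto_zero : Tendsto rogersL (nhdsWithin 0 (Set.Ioi 0)) (nhds 0) := by
  have h1 : Tendsto Li2 (nhdsWithin 0 (Set.Ioi 0)) (nhds 0) := by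
    have hg : Tendsto (fun x : ℝ => 2 * x) (nhdsWithin 0 (Set.Ioi 0)) (nhds 0) := by
      have : Tendsto (fun x : ℝ => 2 * x) (nhds 0) (nhds (2 * 0)) :=
        (continuous_const.mul continuous_id).tendsto 0
      simpa using this.mono_left nhdsWithin_le_nhds
    refine squeeze_zero_norm' ?_ hg
    filter_upwards [Ioo_mem_nhdsGT_of_mem (by norm_num : (0:ℝ) ∈ Set.Ico (0:ℝ) (1/2))]
      with x hx
    have hx0 : 0 < x := hx.1
    have hx2 : x < 1/2 := hx.2
    have hb : ∀ t ∈ Set.uIoc (0:ℝ) x, ‖Real.log (1 - t) / t‖ ≤ 2 := by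
      intro t ht
      rw [Set.uIoc_of_le hx0.le] at ht
      have := dilog_bound_pos (by norm_num : (1:ℝ)/2 < 1) ht.1 (le_trans ht.2 hx2.le)
      rw [Real.norm_eq_abs]
      calc |Real.log (1 - t) / t| ≤ (1 - 1/2)⁻¹ := this
        _ = 2 := by norm_num
    have := intervalIntegral.norm_integral_le_of_norm_le_const hb
    rw [show Li2 x = -∫ t in (0:ℝ)..x, Real.log (1 - t) / t from rfl]
    rw [norm_neg]
    calc ‖∫ t in (0:ℝ)..x, Real.log (1 - t) / t‖ ≤ 2 * |x - 0| := this
      _ = 2 * x := by rw [sub_zero, abs_of_pos hx0]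
  have h2 : Tendsto (fun x : ℝ => (1/2) * Real.log x * Real.log (1 - x))
      (nhdsWithin 0 (Set.Ioi 0)) (nhds 0) := by
    have hg : Tendsto (fun x : ℝ => |Real.log x * x ^ (1:ℝ)|)
        (nhdsWithin 0 (Set.Ioi 0)) (nhds 0) := by
      have := (tendsto_log_mul_rpow_nhdsGT_zero one_pos).abs
      simpa using this
    refine squeeze_zero_norm' ?_ hg
    filter_upwards [Ioo_mem_nhdsGT_of_mem (by norm_num : (0:ℝ) ∈ Set.Ico (0:ℝ) (1/2))]
      with x hx
    have hx0 : 0 < x := hx.1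
    have hlb := log_one_sub_bound hx0 hx.2.le
    have hnn : ‖(1/2) * Real.log x * Real.log (1 - x)‖
        = (1/2) * |Real.log x| * |Real.log (1 - x)| := by
      rw [Real.norm_eq_abs, abs_mul, abs_mul]
      norm_num
    rw [hnn]
    have hstep : (1/2) * |Real.log x| * |Real.log (1 - x)|
        ≤ (1/2) * |Real.log x| * (2 * x) :=
      mul_le_mul_of_nonneg_left hlb (by positivity)
    calc (1/2) * |Real.log x| * |Real.log (1 - x)|
        ≤ (1/2) * |Real.log x| * (2 * x) := hstep
      _ = |Real.log x| * x := by ring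
      _ = |Real.log x * x ^ (1:ℝ)| := by
          rw [abs_mul, Real.rpow_one, abs_of_pos hx0]
  have h := h1.add h2
  simp only [add_zero] at h
  exact h

lemma rogersL_tendsto_atBot :
    Tendsto rogersL atBot (nhds (rogersL (-1/1) - rogersL (1/(1+1)))) := by
  set K : ℝ := rogersL (-1/1) - rogersL (1/(1+1)) with hKdef
  have hrew : ∀ y : ℝ, y < -1 → rogersL y = K + rogersL (1/(1-y)) := by
    intro y hy
    have hy0 : y < 0 := by linarith
    have ha : 0 < -1/y := div_pos_of_neg_of_neg (by norm_num) hy0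
    have h := G_const ha one_pos
    have e1 : -1/(-1/y) = y := by field_simp [hy0.ne]
    have e2 : (-1/y)/(1+(-1/y)) = 1/(1-y) := by
      rw [div_eq_div_iff, one_mul]
      · field_simp [hy0.ne]
        ring
      · have hyy : 1 + -1/y = (y-1)/y := by rw [sub_div, div_self hy0.ne]; ring
        rw [hyy]
        exact div_ne_zero (by linarith) hy0.ne
      · exact (by linarith : (0:ℝ) < 1 - y).ne'
    rw [e1, e2] at h
    linarith [h]
  have htend : Tendsto (fun y : ℝ => 1/(1-y)) atBot (nhdsWithin 0 (Set.Ioi 0)) := by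
    rw [tendsto_nhdsWithin_iff]
    constructor
    · have h1 : Tendsto (fun y : ℝ => 1 - y) atBot atTop := by
        have : Tendsto (Neg.neg : ℝ → ℝ) atBot atTop := tendsto_neg_atBot_atTop
        exact tendsto_atTop_add_const_left atBot 1 this |>.congr (fun y => by ring)
      have := tendsto_inv_atTop_zero.comp h1
      simpa [one_div, Function.comp_def] using this
    · filter_upwards [eventually_le_atBot (0:ℝ)] with y hy
      have : (0:ℝ) < 1 - y := by linarith
      exact Set.mem_Ioi.2 (by positivity)
  have h2 : Tendsto (fun y : ℝ => K + rogersL (1/(1-y))) atBot (nhds (K + 0)) :=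
    tendsto_const_nhds.add (rogersL_tendsto_zero.comp htend)
  rw [add_zero] at h2
  apply h2.congr'
  filter_upwards [eventually_lt_atBot (-1:ℝ)] with y hy
  exact (hrew y hy).symm

/-- The inner-integral value is `4` times the derivative of
`x ↦ 𝓛((x−c)/(d−c))` on `(−∞,c)`; consequently, with `c = 2` and `d = 2+2a`,
its integral over `(−∞,0)` equals `4·𝓛(a/(1+a))`. -/
theorem deriv_rogersL_and_outer_integral (c d : ℝ) (hcd : c < d) :
    (∀ x < c,
        (2 / (x - d)) * Real.log |(x - c) / (d - c)|
            - (2 / (x - c)) * Real.log |(x - d) / (c - d)| =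
          4 * deriv (fun t : ℝ => rogersL ((t - c) / (d - c))) x) ∧
      ∀ a : ℝ, 0 < a → a < 1 →
        (∫ x in Set.Iio (0 : ℝ),
            ((2 / (x - (2 + 2 * a))) * Real.log |(x - 2) / ((2 + 2 * a) - 2)|
              - (2 / (x - 2)) * Real.log |(x - (2 + 2 * a)) / (2 - (2 + 2 * a))|)) =
          4 * rogersL (a / (1 + a)) := by
  constructor
  · intro x hx
    rw [(rogersL_comp_hasDerivAt hcd hx.ne (hx.trans hcd)).deriv]
    exact key_alg hcd hx
  · intro a ha0 ha1
    have h22a : (2:ℝ) < 2 + 2 * a := by linarith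
    set I : ℝ → ℝ := fun x =>
      (2 / (x - (2 + 2 * a))) * Real.log |(x - 2) / ((2 + 2 * a) - 2)|
        - (2 / (x - 2)) * Real.log |(x - (2 + 2 * a)) / (2 - (2 + 2 * a))| with hI
    set K : ℝ := rogersL (-1/1) - rogersL (1/(1+1)) with hK
    set g : ℝ → ℝ := fun z => -4 * rogersL ((-z - 2) / ((2 + 2 * a) - 2)) with hg
    have hderiv : ∀ y ∈ Ici (0:ℝ), HasDerivAt g (I (-y)) y := by
      intro y hy
      have hy0 : (0:ℝ) ≤ y := hy
      have hlt : -y < (2:ℝ) := by linarith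
      have hne2 : -y ≠ (2:ℝ) := by linarith
      have hF := rogersL_comp_hasDerivAt h22a hne2 (by linarith : -y < 2 + 2 * a)
      have hneg : HasDerivAt (fun z : ℝ => -z) (-1:ℝ) y := by
        exact hasDerivAt_neg (x := y)
      have hval := key_alg h22a hlt
      have hcomp := (hF.comp y hneg).const_mul (-4:ℝ)
      refine hcomp.congr_deriv ?_
      symm
      simp only [hI]
      linear_combination hval
    have hpos : ∀ y ∈ Ioi (0:ℝ), 0 ≤ I (-y) := by
      intro y hy
      have hlt : -y < (2:ℝ) := by linarith [Set.mem_Ioi.1 hy]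
      have hval := key_alg h22a hlt
      have hu : (-y - 2) / ((2 + 2 * a) - 2) < -1 := by
        rw [div_lt_iff₀ (by linarith : (0:ℝ) < (2 + 2 * a) - 2)]
        have : (0:ℝ) < y := hy
        nlinarith
      have hnn := rprime_nonneg hu
      have h1 : (0:ℝ) < 1 / ((2 + 2 * a) - 2) := by
        apply div_pos one_pos; linarith
      have : 0 ≤ 4 * ((-(1/2) * (Real.log (1 - (-y - 2) / ((2 + 2 * a) - 2)) / ((-y - 2) / ((2 + 2 * a) - 2))
        + Real.log ((-y - 2) / ((2 + 2 * a) - 2)) / (1 - (-y - 2) / ((2 + 2 * a) - 2)))) * (1 / ((2 + 2 * a) - 2))) := by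
        apply mul_nonneg (by norm_num)
        exact mul_nonneg hnn h1.le
      calc (0:ℝ) ≤ _ := this
        _ = I (-y) := by rw [hI]; linear_combination -hval
    have htend : Tendsto g atTop (nhds (-4 * K)) := by
      have hinner : Tendsto (fun z : ℝ => (-z - 2) / ((2 + 2 * a) - 2)) atTop atBot := by
        apply Tendsto.atBot_div_const (by linarith : (0:ℝ) < (2 + 2 * a) - 2)
        have h1 : Tendsto (Neg.neg : ℝ → ℝ) atTop atBot := tendsto_neg_atTop_atBot
        have := tendsto_atBot_add_const_right atTop (-2:ℝ) h1
        exact this.congr (fun z => by ring)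
      have := (rogersL_tendsto_atBot.comp hinner).const_mul (-4:ℝ)
      rw [hg]
      exact this
    have key := integral_Ioi_of_hasDerivAt_of_nonneg' hderiv hpos htend
    have hg0 : g 0 = -4 * rogersL (-1/a) := by
      rw [hg]
      norm_num
      congr 1
      rw [div_eq_div_iff (by positivity : ((2:ℝ) * a) ≠ 0) ha0.ne']
      ring
    have hGa := G_const ha0 one_pos
    calc ∫ x in Set.Iio (0:ℝ), I x
        = ∫ x in Set.Iic (0:ℝ), I x := (integral_Iic_eq_integral_Iio).symm
      _ = ∫ x in Set.Ioi (0:ℝ), I (-x) := by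
          have h := integral_comp_neg_Ioi 0 I
          rw [neg_zero] at h
          exact h.symm
      _ = -4 * K - g 0 := key
      _ = 4 * rogersL (a / (1 + a)) := by
          rw [hg0, hK]
          have : rogersL (-1/a) - rogersL (a/(1+a)) = rogersL (-1/1) - rogersL (1/(1+1)) := hGa
          linarith
end
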